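/- If ξ : [0,∞) → ℝ is a continuous N-regular function (i.e. 2N-times continuously differentiable with its first N odd-order derivatives vanishing at 0), and χ(r) = -∫_∞^r g(x) dx with g(x) = -(G/x²)·4π∫₀^x t²ξ(t) dt, assuming these integrals converge, then χ is (N+1)-regular. -/

import Mathlib

open Set MeasureTheory Filter

noncomputable def PhiI (j : ℕ) (φ : ℝ → ℝ) (x : ℝ) : ℝ :=
  ∫ s in (0:ℝ)..1, s ^ j * φ (max (s * x) 0)

lemma contMax {φ : ℝ → ℝ} (hφ : ContinuousOn φ (Ici 0)) :
    Continuous (fun t => φ (max t 0)) :=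
  hφ.comp_continuous (continuous_id.max continuous_const) (fun t => Set.mem_Ici.mpr (le_max_right _ _))

lemma PhiI_cont {φ : ℝ → ℝ} (hφ : ContinuousOn φ (Ici 0)) (j : ℕ) :
    Continuous (PhiI j φ) := by
  have h : Continuous (Function.uncurry fun (x s : ℝ) => s ^ j * φ (max (s * x) 0)) := by
    apply Continuous.mul
    · exact continuous_snd.pow j
    · exact (contMax hφ).comp (continuous_snd.mul continuous_fst)
  exact intervalIntegral.continuous_parametric_intervalIntegral_of_continuous' h 0 1

lemma PhiI_zero (j : ℕ) (φ : ℝ → ℝ) : PhiI j φ 0 = φ 0 / (j + 1) := by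
  unfold PhiI
  simp only [mul_zero, max_self]
  rw [intervalIntegral.integral_mul_const, integral_pow]
  simp [zero_pow (Nat.succ_ne_zero j)]
  ring

lemma PhiI_congr {φ ψ : ℝ → ℝ} (h : Set.EqOn φ ψ (Ici 0)) (j : ℕ) :
    PhiI j φ = PhiI j ψ := by
  funext x
  unfold PhiI
  congr 1
  funext s
  rw [h (Set.mem_Ici.mpr (le_max_right _ _))]

lemma PhiI_smul (φ : ℝ → ℝ) (j : ℕ) (x : ℝ) :
    x ^ (j + 1) * PhiI j φ x = ∫ t in (0:ℝ)..x, t ^ j * φ (max t 0) := by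
  have h := intervalIntegral.smul_integral_comp_mul_left
      (a := 0) (b := 1) (fun t => t ^ j * φ (max t 0)) x
  simp only [mul_zero, mul_one, smul_eq_mul] at h
  rw [← h]
  unfold PhiI
  rw [show x ^ (j+1) = x * x ^ j by ring, mul_assoc, ← intervalIntegral.integral_const_mul]
  congr 1
  apply intervalIntegral.integral_congr
  intro s _
  simp only [mul_pow, mul_comm x s]
  ring

lemma F_hasDerivAt {φ : ℝ → ℝ} (hφ : ContinuousOn φ (Ici 0)) (j : ℕ) (x : ℝ) :
    HasDerivAt (fun y => ∫ t in (0:ℝ)..y, t ^ j * φ (max t 0)) (x ^ j * φ (max x 0)) x := by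
  have hc : Continuous (fun t : ℝ => t ^ j * φ (max t 0)) :=
    (continuous_pow j).mul (contMax hφ)
  exact (hc.integral_hasStrictDerivAt 0 x).hasDerivAt

lemma hasDerivWithinAt_mul_PhiI {φ : ℝ → ℝ} (hφ : ContinuousOn φ (Ici 0)) (j : ℕ) {x : ℝ}
    (hx : x ∈ Ici (0:ℝ)) :
    HasDerivWithinAt (fun y => y * PhiI j φ y) (φ x - j * PhiI j φ x) (Ici 0) x := by
  rcases eq_or_lt_of_le (show (0:ℝ) ≤ x from hx) with h0 | hpos
  · subst h0
    have hΦ0 : PhiI j φ 0 = φ 0 / (j + 1) := PhiI_zero j φ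
    have hval : φ 0 - j * PhiI j φ 0 = PhiI j φ 0 := by
      rw [hΦ0]
      field_simp
      ring
    rw [hval, hasDerivWithinAt_iff_tendsto_slope]
    apply Tendsto.congr' ?_ (((PhiI_cont hφ j).tendsto 0).mono_left nhdsWithin_le_nhds)
    filter_upwards [self_mem_nhdsWithin] with y hy
    have hy0 : y ≠ 0 := by
      intro h; exact hy.2 (by simp [h])
    rw [slope_def_field]
    field_simp
    ring
  · -- x > 0
    set F : ℝ → ℝ := fun y => ∫ t in (0:ℝ)..y, t ^ j * φ (max t 0) with hF
    have hFs : ∀ y : ℝ, y ^ (j+1) * PhiI j φ y = F y := fun y => PhiI_smul φ j y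
    have hx0 : x ≠ 0 := ne_of_gt hpos
    have hFd : HasDerivAt F (x ^ j * φ (max x 0)) x := F_hasDerivAt hφ j x
    have hq : HasDerivAt (fun y => F y / y ^ j)
        ((x ^ j * φ (max x 0) * x ^ j - F x * (j * x ^ (j-1))) / (x ^ j) ^ 2) x :=
      hFd.div (hasDerivAt_pow j x) (pow_ne_zero j hx0)
    have heq : (fun y => y * PhiI j φ y) =ᶠ[nhds x] fun y => F y / y ^ j := by
      filter_upwards [eventually_gt_nhds hpos] with y hy
      have hyj : y ^ j ≠ 0 := pow_ne_zero _ (ne_of_gt hy)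
      rw [← hFs y, pow_succ]
      field_simp
    have hval : (x ^ j * φ (max x 0) * x ^ j - F x * (j * x ^ (j-1))) / (x ^ j) ^ 2
        = φ x - j * PhiI j φ x := by
      have hFx : F x = x ^ (j+1) * PhiI j φ x := (hFs x).symm
      rw [hFx, max_eq_left hx]
      rcases j with _ | i
      · norm_num
      · have : (i + 1 : ℕ) - 1 = i := rfl
        rw [this]
        field_simp
        ring
    rw [← hval]
    exact ((hq.congr_of_eventuallyEq heq).hasDerivWithinAt)

lemma PhiI_parts {φ : ℝ → ℝ} (hφ : ContDiffOn ℝ 1 φ (Ici 0)) (j : ℕ) {x : ℝ}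
    (hx : x ∈ Ici (0:ℝ)) :
    φ x = (j + 1) * PhiI j φ x + x * PhiI (j + 1) (derivWithin φ (Ici 0)) x := by
  set φ' : ℝ → ℝ := derivWithin φ (Ici 0) with hφ'def
  have hφ'c : ContinuousOn φ' (Ici 0) :=
    (hφ.derivWithin (uniqueDiffOn_Ici 0) (by norm_num : (0:WithTop ℕ∞) + 1 ≤ 1)).continuousOn
  rcases eq_or_lt_of_le (show (0:ℝ) ≤ x from hx) with h0 | hpos
  · subst h0
    rw [PhiI_zero, PhiI_zero]
    have : ((j:ℝ) + 1) ≠ 0 := by positivity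
    field_simp
    ring
  · -- FTC on s ↦ s^(j+1) * φ (max (s*x) 0) over [0,1]
    set q : ℝ → ℝ := fun s => s ^ (j+1) * φ (max (s * x) 0) with hqdef
    set q' : ℝ → ℝ := fun s =>
      ((j:ℝ) + 1) * (s ^ j * φ (max (s * x) 0)) + x * (s ^ (j+1) * φ' (max (s * x) 0)) with hq'def
    have hqc : Continuous q :=
      (continuous_pow (j+1)).mul ((contMax hφ.continuousOn).comp (continuous_id.mul continuous_const))
    have hq'c : Continuous q' := by
      apply Continuous.add
      · exact continuous_const.mul ((continuous_pow j).mul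
          ((contMax hφ.continuousOn).comp (continuous_id.mul continuous_const)))
      · exact continuous_const.mul ((continuous_pow (j+1)).mul
          ((contMax hφ'c).comp (continuous_id.mul continuous_const)))
    have hderiv : ∀ s ∈ Ioo (0:ℝ) 1, HasDerivWithinAt q (q' s) (Ioi s) s := by
      intro s hs
      have hsx : 0 < s * x := mul_pos hs.1 hpos
      have hdφ : HasDerivAt φ (φ' (s * x)) (s * x) :=
        (((hφ.differentiableOn one_ne_zero) (s*x) (le_of_lt hsx)).hasDerivWithinAt).hasDerivAt
          (Ici_mem_nhds hsx)
      have hcomp : HasDerivAt (fun s' : ℝ => φ (s' * x)) (φ' (s * x) * x) s :=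
        HasDerivAt.comp s hdφ (hasDerivAt_mul_const x)
      have hmul : HasDerivAt (fun s' : ℝ => s' ^ (j+1) * φ (s' * x))
          (((j:ℝ)+1) * s ^ j * φ (s * x) + s ^ (j+1) * (φ' (s * x) * x)) s := by
        have := (hasDerivAt_pow (j+1) s).fun_mul hcomp
        simpa using this
      have hcm : ContinuousAt (fun s' : ℝ => s' * x) s := (continuous_mul_right x).continuousAt
      have hev : ∀ᶠ s' in nhds s, 0 < s' * x :=
        hcm.eventually_mem (Ioi_mem_nhds hsx)
      have hq : HasDerivAt q (((j:ℝ)+1) * s ^ j * φ (s * x) + s ^ (j+1) * (φ' (s * x) * x)) s := by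
        apply hmul.congr_of_eventuallyEq
        filter_upwards [hev] with s' h
        simp only [hqdef, max_eq_left (le_of_lt h)]
      have hval : ((j:ℝ)+1) * s ^ j * φ (s * x) + s ^ (j+1) * (φ' (s * x) * x) = q' s := by
        simp only [hq'def, max_eq_left (le_of_lt hsx)]
        ring
      rw [← hval]
      exact hq.hasDerivWithinAt
    have key : ∫ s in (0:ℝ)..1, q' s = q 1 - q 0 :=
      intervalIntegral.integral_eq_sub_of_hasDeriv_right_of_le zero_le_one
        (hqc.continuousOn) hderiv (hq'c.intervalIntegrable 0 1)
    have hq1 : q 1 = φ x := by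
      simp only [hqdef, one_pow, one_mul, max_eq_left (Set.mem_Ici.mp hx)]
    have hq0 : q 0 = 0 := by
      simp [hqdef, zero_pow (Nat.succ_ne_zero j)]
    have hsplit : ∫ s in (0:ℝ)..1, q' s
        = ((j:ℝ)+1) * PhiI j φ x + x * PhiI (j+1) φ' x := by
      have hi1 : IntervalIntegrable (fun s : ℝ => ((j:ℝ)+1) * (s ^ j * φ (max (s*x) 0))) MeasureTheory.volume 0 1 := by
        apply Continuous.intervalIntegrable
        exact continuous_const.mul ((continuous_pow j).mul
          ((contMax hφ.continuousOn).comp (continuous_id.mul continuous_const)))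
      have hi2 : IntervalIntegrable (fun s : ℝ => x * (s ^ (j+1) * φ' (max (s*x) 0))) MeasureTheory.volume 0 1 := by
        apply Continuous.intervalIntegrable
        exact continuous_const.mul ((continuous_pow (j+1)).mul
          ((contMax hφ'c).comp (continuous_id.mul continuous_const)))
      rw [hq'def]
      rw [intervalIntegral.integral_add hi1 hi2]
      rw [intervalIntegral.integral_const_mul, intervalIntegral.integral_const_mul]
      rfl
    rw [hsplit, hq1, hq0, sub_zero] at key
    exact key.symm

lemma PhiI_hasDerivWithinAt {φ : ℝ → ℝ} (hφ : ContDiffOn ℝ 1 φ (Ici 0)) (j : ℕ) {x : ℝ}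
    (hx : x ∈ Ici (0:ℝ)) :
    HasDerivWithinAt (PhiI j φ) (PhiI (j+1) (derivWithin φ (Ici 0)) x) (Ici 0) x := by
  set φ' : ℝ → ℝ := derivWithin φ (Ici 0) with hφ'def
  have hφ'c : ContinuousOn φ' (Ici 0) :=
    (hφ.derivWithin (uniqueDiffOn_Ici 0) (by norm_num : (0:WithTop ℕ∞) + 1 ≤ 1)).continuousOn
  have hφd : DifferentiableOn ℝ φ (Ici 0) := hφ.differentiableOn one_ne_zero
  have hj1 : ((j:ℝ) + 1) ≠ 0 := by positivity
  have heq : ∀ y ∈ Ici (0:ℝ), PhiI j φ y = (φ y - y * PhiI (j+1) φ' y) / ((j:ℝ)+1) := by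
    intro y hy
    have h := PhiI_parts hφ j hy
    field_simp
    linarith [h]
  have hd : HasDerivWithinAt (fun y => (φ y - y * PhiI (j+1) φ' y) / ((j:ℝ)+1))
      ((φ' x - (φ' x - ((j:ℝ)+1) * PhiI (j+1) φ' x)) / ((j:ℝ)+1)) (Ici 0) x := by
    apply HasDerivWithinAt.div_const
    apply HasDerivWithinAt.sub
    · exact (hφd x hx).hasDerivWithinAt
    · have := hasDerivWithinAt_mul_PhiI hφ'c (j+1) hx
      simpa using this
  have hval : (φ' x - (φ' x - ((j:ℝ)+1) * PhiI (j+1) φ' x)) / ((j:ℝ)+1) = PhiI (j+1) φ' x := by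
    field_simp
    ring
  rw [← hval]
  exact hd.congr heq (heq x hx)

lemma PhiI_contDiffOn {k : ℕ} {φ : ℝ → ℝ} (hφ : ContDiffOn ℝ (k:ℕ) φ (Ici 0)) (j : ℕ) :
    ContDiffOn ℝ (k:ℕ) (PhiI j φ) (Ici 0) := by
  induction k generalizing φ j with
  | zero =>
    rw [show ((0:ℕ):WithTop ℕ∞) = 0 from rfl, contDiffOn_zero] at hφ ⊢
    exact (PhiI_cont hφ j).continuousOn
  | succ k IH =>
    have hone : ContDiffOn ℝ 1 φ (Ici 0) := hφ.of_le (by exact_mod_cast Nat.one_le_iff_ne_zero.2 (Nat.succ_ne_zero k))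
    have hcast : ((k+1:ℕ) : WithTop ℕ∞) = (k:ℕ) + 1 := by push_cast; rfl
    rw [hcast, contDiffOn_succ_iff_derivWithin (uniqueDiffOn_Ici 0)]
    refine ⟨fun x hx => (PhiI_hasDerivWithinAt hone j hx).differentiableWithinAt, ?_, ?_⟩
    · intro h
      exact absurd h (by exact_mod_cast (by simp : ((k:ℕ∞) : WithTop ℕ∞) ≠ ⊤))
    · have hφ' : ContDiffOn ℝ (k:ℕ) (derivWithin φ (Ici 0)) (Ici 0) := by
        apply hφ.derivWithin (uniqueDiffOn_Ici 0)
        rw [hcast]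
      exact (IH hφ' (j+1)).congr
        (fun x hx => (PhiI_hasDerivWithinAt hone j hx).derivWithin (uniqueDiffOn_Ici 0 x hx))

lemma PhiI_iteratedDerivWithin {k : ℕ} {φ : ℝ → ℝ} (hφ : ContDiffOn ℝ (k:ℕ) φ (Ici 0))
    (j : ℕ) {x : ℝ} (hx : x ∈ Ici (0:ℝ)) :
    iteratedDerivWithin k (PhiI j φ) (Ici 0) x
      = PhiI (j + k) (iteratedDerivWithin k φ (Ici 0)) x := by
  induction k generalizing φ j with
  | zero =>
    have h0 : iteratedDerivWithin 0 φ (Ici (0:ℝ)) = φ := by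
      funext y; simp [iteratedDerivWithin_zero]
    simp [iteratedDerivWithin_zero, h0]
  | succ k IH =>
    have hone : ContDiffOn ℝ 1 φ (Ici 0) := hφ.of_le (by exact_mod_cast Nat.one_le_iff_ne_zero.2 (Nat.succ_ne_zero k))
    have hφ' : ContDiffOn ℝ (k:ℕ) (derivWithin φ (Ici 0)) (Ici 0) := by
      apply hφ.derivWithin (uniqueDiffOn_Ici 0)
      rw [show ((k+1:ℕ) : WithTop ℕ∞) = (k:ℕ) + 1 from by push_cast; rfl]
    rw [iteratedDerivWithin_succ']
    have hEq : Set.EqOn (derivWithin (PhiI j φ) (Ici 0))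
        (PhiI (j+1) (derivWithin φ (Ici 0))) (Ici 0) :=
      fun y hy => (PhiI_hasDerivWithinAt hone j hy).derivWithin (uniqueDiffOn_Ici 0 y hy)
    rw [iteratedDerivWithin_congr hEq hx]
    rw [IH hφ' (j+1)]
    have hfun : PhiI (j+1+k) (iteratedDerivWithin k (derivWithin φ (Ici 0)) (Ici 0))
        = PhiI (j+1+k) (iteratedDerivWithin (k+1) φ (Ici 0)) := by
      apply PhiI_congr
      intro y hy
      exact (congrFun iteratedDerivWithin_succ' y).symm
    rw [hfun, show j+1+k = j+(k+1) from by omega]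

/-- If the effective source `ξ` is continuous and `N`-regular on `[0,∞)` (i.e. `2N`-times
continuously differentiable with its first `N` odd-order derivatives vanishing at `0`),
then the Newtonian potential `χ(r) = -∫_∞^r g(x) dx`, where `g(x) = -G·m(x)/x²` and
`m(x) = 4π∫₀^x t²ξ(t) dt`, is `(N+1)`-regular, assuming the integrals converge. -/
theorem stmt12 (N : ℕ) (G : ℝ) (hG : 0 < G) (ξ m g χ : ℝ → ℝ)
    (hξc : ContinuousOn ξ (Set.Ici 0))
    (hξd : ContDiffOn ℝ (2 * N : ℕ) ξ (Set.Ici 0))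
    (hξodd : ∀ n < N, iteratedDerivWithin (2 * n + 1) ξ (Set.Ici 0) 0 = 0)
    (hm : ∀ x, m x = 4 * Real.pi * ∫ t in (0:ℝ)..x, t ^ 2 * ξ t)
    (hg : ∀ x, g x = -(G * m x / x ^ 2))
    (hgint : MeasureTheory.IntegrableOn g (Set.Ioi 0))
    (hχ : ∀ r, χ r = ∫ x in Set.Ioi r, g x) :
    ContDiffOn ℝ (2 * (N + 1) : ℕ) χ (Set.Ici 0) ∧
    ∀ n ≤ N, iteratedDerivWithin (2 * n + 1) χ (Set.Ici 0) 0 = 0 := by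
  have uD : UniqueDiffOn ℝ (Set.Ici (0:ℝ)) := uniqueDiffOn_Ici 0
  set H : ℝ → ℝ := PhiI 2 ξ with hH
  have hHc : Continuous H := PhiI_cont hξc 2
  -- m x = 4π x³ H x on Ici 0
  have hmx : ∀ x : ℝ, 0 ≤ x → m x = 4 * Real.pi * (x ^ 3 * H x) := by
    intro x hx
    rw [hm]
    congr 1
    rw [show (x:ℝ)^3 = x^(2+1) from by norm_num, PhiI_smul ξ 2 x]
    apply intervalIntegral.integral_congr
    intro t ht
    rw [Set.uIcc_of_le hx] at ht
    simp [max_eq_left ht.1]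
  -- the nice version of g
  set gn : ℝ → ℝ := fun x => -(4 * Real.pi * G) * (x * H x) with hgn
  have hgeq : Set.EqOn g gn (Set.Ici 0) := by
    intro x hx
    rw [hg, hmx x hx]
    rcases eq_or_lt_of_le (show (0:ℝ) ≤ x from hx) with h0 | h0
    · simp [hgn, ← h0]
    · have hx0 : x ≠ 0 := ne_of_gt h0
      simp only [hgn]
      field_simp
  have hgnc : Continuous gn := continuous_const.mul (continuous_id.mul hHc)
  -- χ r = C - ∫ 0..r gn for r ≥ 0
  set C : ℝ := ∫ x in Set.Ioi (0:ℝ), g x with hC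
  have hχr : ∀ r : ℝ, r ∈ Set.Ici (0:ℝ) → χ r = C - ∫ u in (0:ℝ)..r, gn u := by
    intro r hr
    have hr' : (0:ℝ) ≤ r := hr
    have hsplit : C = (∫ x in Set.Ioc 0 r, g x) + ∫ x in Set.Ioi r, g x := by
      rw [hC, ← MeasureTheory.setIntegral_union (Set.Ioc_disjoint_Ioi le_rfl)
        measurableSet_Ioi (hgint.mono_set Set.Ioc_subset_Ioi_self)
        (hgint.mono_set (Set.Ioi_subset_Ioi hr')), Set.Ioc_union_Ioi_eq_Ioi hr']
    have hint : ∫ u in (0:ℝ)..r, gn u = ∫ x in Set.Ioc 0 r, g x := by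
      rw [intervalIntegral.integral_of_le hr']
      apply MeasureTheory.setIntegral_congr_fun measurableSet_Ioc
      intro y hy
      exact (hgeq (le_of_lt hy.1)).symm
    rw [hχ r, hsplit, hint]
    ring
  -- first derivative of χ
  have hχd : ∀ x ∈ Set.Ici (0:ℝ), HasDerivWithinAt χ (-gn x) (Set.Ici 0) x := by
    intro x hx
    have hFg : HasDerivAt (fun r => C - ∫ u in (0:ℝ)..r, gn u) (-gn x) x :=
      HasDerivAt.const_sub C ((hgnc.integral_hasStrictDerivAt 0 x).hasDerivAt)
    exact (hFg.hasDerivWithinAt).congr hχr (hχr x hx)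
  have hdw : Set.EqOn (derivWithin χ (Set.Ici 0)) (fun x => -gn x) (Set.Ici 0) :=
    fun x hx => (hχd x hx).derivWithin (uD x hx)
  -- second derivative
  have hxH : ∀ x ∈ Set.Ici (0:ℝ), HasDerivWithinAt (fun y => -gn y)
      ((4 * Real.pi * G) * (ξ x - 2 * H x)) (Set.Ici 0) x := by
    intro x hx
    have h1 := (hasDerivWithinAt_mul_PhiI hξc 2 hx).const_mul (4 * Real.pi * G)
    have hfeq : (fun y => (4 * Real.pi * G) * (y * PhiI 2 ξ y)) = fun y => -gn y := by
      funext y; simp only [hgn, ← hH]; ring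
    have hveq : (4 * Real.pi * G) * (ξ x - (2:ℕ) * PhiI 2 ξ x)
        = (4 * Real.pi * G) * (ξ x - 2 * H x) := by
      norm_num [← hH]
    rw [hfeq, hveq] at h1
    exact h1
  have hdw2 : Set.EqOn (derivWithin (fun x => -gn x) (Set.Ici 0))
      (fun x => (4 * Real.pi * G) * (ξ x - 2 * H x)) (Set.Ici 0) :=
    fun x hx => (hxH x hx).derivWithin (uD x hx)
  -- smoothness
  have hH2N : ContDiffOn ℝ (2*N : ℕ) H (Set.Ici 0) := PhiI_contDiffOn hξd 2
  have hc2 : ContDiffOn ℝ (2*N : ℕ) (fun x => (4 * Real.pi * G) * (ξ x - 2 * H x)) (Set.Ici 0) :=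
    contDiffOn_const.mul (hξd.sub (contDiffOn_const.mul hH2N))
  have hg1 : ContDiffOn ℝ (((2*N : ℕ) : WithTop ℕ∞) + 1) (fun x => -gn x) (Set.Ici 0) := by
    rw [contDiffOn_succ_iff_derivWithin uD]
    refine ⟨fun x hx => (hxH x hx).differentiableWithinAt, ?_, hc2.congr hdw2⟩
    intro h
    exact absurd h (WithTop.natCast_ne_top _)
  have hχC : ContDiffOn ℝ (2*(N+1) : ℕ) χ (Set.Ici 0) := by
    have hcast : ((2*(N+1) : ℕ) : WithTop ℕ∞) = ((2*N : ℕ) : WithTop ℕ∞) + 1 + 1 := by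
      push_cast; ring
    rw [hcast, contDiffOn_succ_iff_derivWithin uD]
    refine ⟨fun x hx => (hχd x hx).differentiableWithinAt, ?_, hg1.congr hdw⟩
    intro h
    rw [show ((2*N:ℕ) : WithTop ℕ∞) + 1 = ((2*N+1:ℕ) : WithTop ℕ∞) by push_cast; rfl] at h
    exact absurd h (WithTop.natCast_ne_top _)
  refine ⟨hχC, ?_⟩
  intro n hn
  have h0 : (0:ℝ) ∈ Set.Ici (0:ℝ) := Set.mem_Ici.mpr (le_refl 0)
  cases n with
  | zero =>
    rw [show 2*0+1 = 1 from rfl, iteratedDerivWithin_one, hdw h0]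
    simp [hgn]
  | succ k =>
    have hkN : k < N := by omega
    have h2k1 : (2*k+1 : ℕ) ≤ 2*N := by omega
    have h2k1' : ((2*k+1 : ℕ) : WithTop ℕ∞) ≤ ((2*N : ℕ) : WithTop ℕ∞) := by
      exact_mod_cast h2k1
    rw [show 2*(k+1)+1 = (2*k+1)+1+1 from by ring]
    rw [iteratedDerivWithin_succ', iteratedDerivWithin_succ']
    have e1 : Set.EqOn (derivWithin (derivWithin χ (Set.Ici 0)) (Set.Ici 0))
        (fun x => (4 * Real.pi * G) * (ξ x - 2 * H x)) (Set.Ici 0) := by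
      intro x hx
      rw [derivWithin_congr hdw (hdw hx)]
      exact hdw2 hx
    rw [iteratedDerivWithin_congr e1 h0]
    have hξk : ContDiffOn ℝ (2*k+1 : ℕ) ξ (Set.Ici 0) := hξd.of_le h2k1'
    have hHk : ContDiffOn ℝ (2*k+1 : ℕ) H (Set.Ici 0) := hH2N.of_le h2k1'
    have hsubd : ContDiffOn ℝ (2*k+1 : ℕ) (fun x => ξ x - 2 * H x) (Set.Ici 0) :=
      hξk.sub (contDiffOn_const.mul hHk)
    rw [iteratedDerivWithin_const_mul h0 uD _ (hsubd 0 h0)]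
    have hsplit : (fun x => ξ x - 2 * H x) = ξ - (fun x => 2 * H x) := rfl
    rw [hsplit, iteratedDerivWithin_sub h0 uD (hξk 0 h0) ((contDiffOn_const.mul hHk) 0 h0)]
    rw [iteratedDerivWithin_const_mul h0 uD _ (hHk 0 h0)]
    have hξ0 : iteratedDerivWithin (2*k+1) ξ (Set.Ici 0) 0 = 0 := hξodd k hkN
    have hH0 : iteratedDerivWithin (2*k+1) H (Set.Ici 0) 0 = 0 := by
      rw [hH, PhiI_iteratedDerivWithin hξk 2 h0, PhiI_zero, hξ0, zero_div]
    rw [hξ0, hH0]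
    ring
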